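/- Let h : 𝔻̄ → 𝔻̄ be a finite Blaschke product of degree k+1, i.e. h(z) = λ ∏_{j=0}^{k} (z − α_j)/(ᾱ_j z − 1) with |λ| = 1 and |α_j| < 1 for all j. Then for every ζ on the unit circle, the preimage h^{−1}(ζ) ∩ ∂𝔻 consists of exactly k+1 distinct points of the unit circle. -/

import Mathlib

open Finset

namespace BlaschkeAux
open Polynomial Complex

lemma prod_lt {n : ℕ} (f g : Fin (n+1) → ℝ) (hf : ∀ j, 0 ≤ f j)
    (hfg : ∀ j, f j < g j) : ∏ j, f j < ∏ j, g j := by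
  have hg : ∀ j, 0 < g j := fun j => lt_of_le_of_lt (hf j) (hfg j)
  by_cases hz : ∀ j, 0 < f j
  · exact Finset.prod_lt_prod_of_nonempty (fun j _ => hz j) (fun j _ => hfg j) univ_nonempty
  · push_neg at hz; obtain ⟨j, hj⟩ := hz
    calc ∏ j, f j = 0 := Finset.prod_eq_zero (mem_univ j) (le_antisymm hj (hf j))
    _ < ∏ j, g j := Finset.prod_pos (fun j _ => hg j)

lemma normSq_id (a z : ℂ) : Complex.normSq ((starRingEnd ℂ) a * z - 1) =
    Complex.normSq (z - a) + (1 - Complex.normSq z) * (1 - Complex.normSq a) := by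
  apply Complex.ofReal_injective
  push_cast
  simp only [← Complex.mul_conj]
  simp only [map_mul, map_sub, map_one, Complex.conj_conj]
  ring

lemma normSq_eq_one {z : ℂ} (h : ‖z‖ = 1) : Complex.normSq z = 1 := by
  rw [Complex.normSq_eq_norm_sq, h, one_pow]

lemma den_ne_zero {a z : ℂ} (ha : ‖a‖ < 1) (hz : ‖z‖ = 1) :
    (starRingEnd ℂ) a * z - 1 ≠ 0 := by
  intro hc
  rw [sub_eq_zero] at hc
  have : ‖(starRingEnd ℂ) a * z‖ = ‖a‖ := by
    rw [norm_mul, hz, mul_one, RCLike.norm_conj]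
  rw [hc] at this
  simp at this
  linarith


lemma sq_norm (w : ℂ) : ‖w‖ ^ 2 = Complex.normSq w := by
  rw [Complex.sq_norm]

lemma norm_factor_lt {a z : ℂ} (ha : ‖a‖ < 1) (hz : ‖z‖ < 1) :
    ‖z - a‖ < ‖(starRingEnd ℂ) a * z - 1‖ := by
  apply lt_of_pow_lt_pow_left₀ 2 (norm_nonneg _)
  rw [sq_norm, sq_norm, normSq_id]
  have h1 : Complex.normSq z < 1 := by rw [← sq_norm]; nlinarith [norm_nonneg z]
  have h2 : Complex.normSq a < 1 := by rw [← sq_norm]; nlinarith [norm_nonneg a]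
  nlinarith

lemma norm_factor_gt {a z : ℂ} (ha : ‖a‖ < 1) (hz : 1 < ‖z‖) :
    ‖(starRingEnd ℂ) a * z - 1‖ < ‖z - a‖ := by
  apply lt_of_pow_lt_pow_left₀ 2 (norm_nonneg _)
  rw [sq_norm, sq_norm, normSq_id]
  have h1 : 1 < Complex.normSq z := by rw [← sq_norm]; nlinarith [norm_nonneg z]
  have h2 : Complex.normSq a < 1 := by rw [← sq_norm]; nlinarith [norm_nonneg a]
  nlinarith

lemma roots_norm_one {k : ℕ} {lam ζ z : ℂ} (hlam : ‖lam‖ = 1) (hζ : ‖ζ‖ = 1)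
    {α : Fin (k + 1) → ℂ} (hα : ∀ j, ‖α j‖ < 1)
    (heq : lam * ∏ j, (z - α j) = ζ * ∏ j, ((starRingEnd ℂ) (α j) * z - 1)) :
    ‖z‖ = 1 := by
  have hnorm : ∏ j, ‖z - α j‖ = ∏ j, ‖(starRingEnd ℂ) (α j) * z - 1‖ := by
    have := congrArg norm heq
    simpa [norm_mul, norm_prod, hlam, hζ] using this
  rcases lt_trichotomy ‖z‖ 1 with hlt | he | hgt
  · exact absurd hnorm (ne_of_lt (prod_lt _ _ (fun j => norm_nonneg _)
      (fun j => norm_factor_lt (hα j) hlt)))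
  · exact he
  · exact absurd hnorm.symm (ne_of_lt (prod_lt _ _ (fun j => norm_nonneg _)
      (fun j => norm_factor_gt (hα j) hgt)))


lemma derivative_finset_prod {ι : Type*} [DecidableEq ι] (s : Finset ι) (f : ι → Polynomial ℂ) :
    Polynomial.derivative (∏ i ∈ s, f i) =
      ∑ i ∈ s, (∏ j ∈ s.erase i, f j) * Polynomial.derivative (f i) := by
  induction s using Finset.induction with
  | empty => simp
  | @insert x s hxs ih =>
    rw [Finset.prod_insert hxs, Polynomial.derivative_mul, ih, Finset.sum_insert hxs,
      Finset.erase_insert hxs, Finset.mul_sum]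
    congr 1
    · ring
    · refine Finset.sum_congr rfl fun i hi => ?_
      have hne : i ≠ x := fun hc => hxs (hc ▸ hi)
      rw [Finset.erase_insert_of_ne hne.symm,
        Finset.prod_insert (fun hc => hxs (Finset.mem_of_mem_erase hc))]
      ring


lemma deriv_ne_zero {k : ℕ} {z : ℂ} (hz : ‖z‖ = 1) {α : Fin (k+1) → ℂ}
    (hα : ∀ j, ‖α j‖ < 1) :
    Polynomial.eval z (Polynomial.derivative (∏ j, (X - C (α j))) *
        (∏ j, (C ((starRingEnd ℂ) (α j)) * X - 1))
      - (∏ j, (X - C (α j))) *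
        Polynomial.derivative (∏ j, (C ((starRingEnd ℂ) (α j)) * X - 1))) ≠ 0 := by
  have hzne : z ≠ 0 := by
    intro hc; rw [hc] at hz; simp at hz
  have hz1 : z * (starRingEnd ℂ) z = 1 := by
    rw [Complex.mul_conj, normSq_eq_one hz, Complex.ofReal_one]
  have hzα : ∀ i, z - α i ≠ 0 := by
    intro i hc
    rw [sub_eq_zero] at hc
    have := hα i
    rw [← hc] at this
    exact absurd hz (ne_of_lt this)
  have hfac : ∀ a : ℂ, (z - a) * ((starRingEnd ℂ) a * z - 1) =
      -z * ((Complex.normSq (z - a) : ℝ) : ℂ) := by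
    intro a
    rw [← Complex.mul_conj]
    simp only [map_sub]
    linear_combination (z - a) * hz1
  -- per-term identity
  have hterm : ∀ j : Fin (k+1),
      (∏ i ∈ univ.erase j, (z - α i)) * (∏ i, ((starRingEnd ℂ) (α i) * z - 1)) -
        (∏ i, (z - α i)) * ((∏ i ∈ univ.erase j, ((starRingEnd ℂ) (α i) * z - 1)) *
          (starRingEnd ℂ) (α j)) =
      (((Complex.normSq (α j) : ℝ) : ℂ) - 1) *
        ∏ i ∈ univ.erase j, ((z - α i) * ((starRingEnd ℂ) (α i) * z - 1)) := by
    intro j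
    rw [← Finset.mul_prod_erase univ (fun i => (z - α i)) (mem_univ j),
      ← Finset.mul_prod_erase univ (fun i => (starRingEnd ℂ) (α i) * z - 1) (mem_univ j),
      Finset.prod_mul_distrib]
    linear_combination (∏ i ∈ univ.erase j, (z - α i)) *
      (∏ i ∈ univ.erase j, ((starRingEnd ℂ) (α i) * z - 1)) * (Complex.mul_conj (α j))
  have herase : ∀ j : Fin (k+1),
      ∏ i ∈ univ.erase j, ((z - α i) * ((starRingEnd ℂ) (α i) * z - 1)) =
      (-z)^k * ((∏ i ∈ univ.erase j, Complex.normSq (z - α i) : ℝ) : ℂ) := by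
    intro j
    rw [Finset.prod_congr rfl (fun i _ => hfac (α i)), Finset.prod_mul_distrib,
      Finset.prod_const, card_erase_of_mem (mem_univ j), card_univ, Fintype.card_fin]
    norm_cast
  -- evaluate the polynomial expression
  have hNd : Polynomial.eval z (Polynomial.derivative (∏ j, (X - C (α j)))) =
      ∑ j, ∏ i ∈ univ.erase j, (z - α i) := by
    rw [derivative_finset_prod]
    simp [eval_finset_sum, eval_prod]
  have hDd : Polynomial.eval z
      (Polynomial.derivative (∏ j, (C ((starRingEnd ℂ) (α j)) * X - 1))) =
      ∑ j, (∏ i ∈ univ.erase j, ((starRingEnd ℂ) (α i) * z - 1)) * (starRingEnd ℂ) (α j) := by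
    rw [derivative_finset_prod]
    simp [eval_finset_sum, eval_prod]
  have heval : Polynomial.eval z (Polynomial.derivative (∏ j, (X - C (α j))) *
        (∏ j, (C ((starRingEnd ℂ) (α j)) * X - 1))
      - (∏ j, (X - C (α j))) *
        Polynomial.derivative (∏ j, (C ((starRingEnd ℂ) (α j)) * X - 1))) =
      ∑ j, (((Complex.normSq (α j) : ℝ) : ℂ) - 1) *
        ((-z)^k * ((∏ i ∈ univ.erase j, Complex.normSq (z - α i) : ℝ) : ℂ)) := by
    rw [eval_sub, eval_mul, eval_mul, hNd, hDd, eval_prod, eval_prod]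
    simp only [eval_sub, eval_mul, eval_X, eval_C, eval_one]
    rw [Finset.sum_mul, Finset.mul_sum, ← Finset.sum_sub_distrib]
    refine Finset.sum_congr rfl fun j _ => ?_
    rw [← herase j, ← hterm j]
  rw [heval]
  have hpull : ∑ j, (((Complex.normSq (α j) : ℝ) : ℂ) - 1) *
        ((-z)^k * ((∏ i ∈ univ.erase j, Complex.normSq (z - α i) : ℝ) : ℂ)) =
      (-z)^k * (((∑ j, (Complex.normSq (α j) - 1) *
        ∏ i ∈ univ.erase j, Complex.normSq (z - α i) : ℝ)) : ℂ) := by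
    push_cast
    rw [Finset.mul_sum]
    exact Finset.sum_congr rfl fun j _ => by ring
  rw [hpull]
  apply mul_ne_zero (pow_ne_zero _ (neg_ne_zero.mpr hzne))
  rw [Complex.ofReal_ne_zero]
  apply ne_of_lt
  have : ∑ j : Fin (k+1), (Complex.normSq (α j) - 1) *
      ∏ i ∈ univ.erase j, Complex.normSq (z - α i) < ∑ _j : Fin (k+1), (0:ℝ) := by
    apply Finset.sum_lt_sum_of_nonempty univ_nonempty
    intro j _
    apply mul_neg_of_neg_of_pos
    · have := hα j; rw [← sq_norm]; nlinarith [norm_nonneg (α j)]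
    · exact Finset.prod_pos fun i _ => Complex.normSq_pos.mpr (hzα i)
  simpa using this


variable (k : ℕ) (lam ζ : ℂ) (α : Fin (k+1) → ℂ)

/-- numerator polynomial -/
noncomputable def NN : Polynomial ℂ := ∏ j, (X - C (α j))
/-- denominator polynomial -/
noncomputable def DD : Polynomial ℂ := ∏ j, (C ((starRingEnd ℂ) (α j)) * X - 1)
/-- difference polynomial -/
noncomputable def PP : Polynomial ℂ := C lam * NN k α - C ζ * DD k α

lemma eval_NN (z : ℂ) : (NN k α).eval z = ∏ j, (z - α j) := by
  simp [NN, eval_prod]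

lemma eval_DD (z : ℂ) : (DD k α).eval z = ∏ j, ((starRingEnd ℂ) (α j) * z - 1) := by
  simp [DD, eval_prod]

lemma eval_PP (z : ℂ) : (PP k lam ζ α).eval z =
    lam * ∏ j, (z - α j) - ζ * ∏ j, ((starRingEnd ℂ) (α j) * z - 1) := by
  simp [PP, eval_NN, eval_DD]

lemma natDegree_NN : (NN k α).natDegree = k + 1 := by
  simp [NN, natDegree_prod_of_monic _ _ (fun j _ => monic_X_sub_C (α j)), natDegree_X_sub_C]

lemma coeff_NN : (NN k α).coeff (k+1) = 1 := by
  have hNm : (NN k α).Monic := monic_prod_of_monic _ _ (fun j _ => monic_X_sub_C (α j))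
  rw [← natDegree_NN k α]
  exact hNm.coeff_natDegree

lemma natDegree_DD_factor (j : Fin (k+1)) :
    (C ((starRingEnd ℂ) (α j)) * X - 1 : Polynomial ℂ).natDegree ≤ 1 := by
  apply le_trans (natDegree_sub_le _ _)
  simp only [natDegree_one, max_le_iff]
  exact ⟨by simpa using natDegree_C_mul_le ((starRingEnd ℂ) (α j)) X, Nat.zero_le 1⟩

lemma natDegree_DD : (DD k α).natDegree ≤ k + 1 := by
  apply le_trans (natDegree_prod_le _ _)
  calc ∑ j : Fin (k+1), (C ((starRingEnd ℂ) (α j)) * X - 1 : Polynomial ℂ).natDegree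
      ≤ ∑ _j : Fin (k+1), 1 := Finset.sum_le_sum (fun j _ => natDegree_DD_factor k α j)
    _ = k + 1 := by simp

lemma coeff_DD : (DD k α).coeff (k+1) = ∏ j, (starRingEnd ℂ) (α j) := by
  have h := coeff_prod_of_natDegree_le (s := (univ : Finset (Fin (k+1))))
    (fun j => (C ((starRingEnd ℂ) (α j)) * X - 1 : Polynomial ℂ)) 1
    (fun j _ => natDegree_DD_factor k α j)
  simp only [card_univ, Fintype.card_fin, mul_one] at h
  rw [DD, h]
  exact Finset.prod_congr rfl fun j _ => by simp [Polynomial.coeff_one]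

lemma coeff_PP : (PP k lam ζ α).coeff (k+1) = lam - ζ * ∏ j, (starRingEnd ℂ) (α j) := by
  simp [PP, coeff_sub, coeff_C_mul, coeff_NN, coeff_DD]

lemma coeff_PP_ne_zero (hlam : ‖lam‖ = 1) (hζ : ‖ζ‖ = 1) (hα : ∀ j, ‖α j‖ < 1) :
    (PP k lam ζ α).coeff (k+1) ≠ 0 := by
  rw [coeff_PP, sub_ne_zero]
  intro hc
  have h1 : ‖ζ * ∏ j, (starRingEnd ℂ) (α j)‖ = ∏ j, ‖α j‖ := by
    rw [norm_mul, hζ, one_mul, norm_prod]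
    exact Finset.prod_congr rfl fun j _ => RCLike.norm_conj _
  have h2 : ∏ j, ‖α j‖ < 1 := by
    have := prod_lt (fun j => ‖α j‖) (fun _ => 1) (fun j => norm_nonneg _) hα
    simpa using this
  rw [← hc, hlam] at h1
  linarith

lemma PP_ne_zero (hlam : ‖lam‖ = 1) (hζ : ‖ζ‖ = 1) (hα : ∀ j, ‖α j‖ < 1) :
    PP k lam ζ α ≠ 0 := fun hc =>
  coeff_PP_ne_zero k lam ζ α hlam hζ hα (by rw [hc]; simp)

lemma natDegree_PP (hlam : ‖lam‖ = 1) (hζ : ‖ζ‖ = 1) (hα : ∀ j, ‖α j‖ < 1) :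
    (PP k lam ζ α).natDegree = k + 1 := by
  refine le_antisymm ?_ (le_natDegree_of_ne_zero (coeff_PP_ne_zero k lam ζ α hlam hζ hα))
  apply le_trans (natDegree_sub_le _ _)
  rw [max_le_iff]
  constructor
  · exact le_trans (natDegree_C_mul_le _ _) (le_of_eq (natDegree_NN k α))
  · exact le_trans (natDegree_C_mul_le _ _) (natDegree_DD k α)

lemma derivative_PP : Polynomial.derivative (PP k lam ζ α) =
    C lam * Polynomial.derivative (NN k α) - C ζ * Polynomial.derivative (DD k α) := by
  simp [PP, derivative_sub, derivative_C_mul]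

lemma deriv_ne_zero' {z : ℂ} (hz : ‖z‖ = 1) (hα : ∀ j, ‖α j‖ < 1) :
    Polynomial.eval z (Polynomial.derivative (NN k α) * DD k α
      - NN k α * Polynomial.derivative (DD k α)) ≠ 0 := by
  unfold NN DD
  exact deriv_ne_zero hz hα

end BlaschkeAux

/-- A finite Blaschke product of degree `k+1` restricted to the unit circle has exactly
`k+1` preimages on the circle of any point of the circle. -/
theorem blaschke_circle_preimages (k : ℕ) (lam : ℂ) (hlam : ‖lam‖ = 1)
    (α : Fin (k + 1) → ℂ) (hα : ∀ j, ‖α j‖ < 1)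
    (h : ℂ → ℂ)
    (hh : ∀ z : ℂ, h z = lam * ∏ j, (z - α j) / ((starRingEnd ℂ) (α j) * z - 1))
    (ζ : ℂ) (hζ : ‖ζ‖ = 1) :
    ({z : ℂ | ‖z‖ = 1 ∧ h z = ζ}).Finite ∧
      ({z : ℂ | ‖z‖ = 1 ∧ h z = ζ}).ncard = k + 1 := by
  classical
  have hP0 : BlaschkeAux.PP k lam ζ α ≠ 0 := BlaschkeAux.PP_ne_zero k lam ζ α hlam hζ hα
  have hden : ∀ z : ℂ, ‖z‖ = 1 → ∏ j, ((starRingEnd ℂ) (α j) * z - 1) ≠ 0 := fun z hz =>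
    Finset.prod_ne_zero_iff.mpr (fun j _ => BlaschkeAux.den_ne_zero (hα j) hz)
  have hiff : ∀ z : ℂ, (‖z‖ = 1 ∧ h z = ζ) ↔ (BlaschkeAux.PP k lam ζ α).IsRoot z := by
    intro z
    constructor
    · rintro ⟨hz, hhz⟩
      rw [hh z, Finset.prod_div_distrib, ← mul_div_assoc, div_eq_iff (hden z hz)] at hhz
      rw [Polynomial.IsRoot, BlaschkeAux.eval_PP, sub_eq_zero]
      exact hhz
    · intro hroot
      have heq : lam * ∏ j, (z - α j) = ζ * ∏ j, ((starRingEnd ℂ) (α j) * z - 1) := by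
        rw [Polynomial.IsRoot, BlaschkeAux.eval_PP, sub_eq_zero] at hroot
        exact hroot
      have hz : ‖z‖ = 1 := BlaschkeAux.roots_norm_one hlam hζ hα heq
      refine ⟨hz, ?_⟩
      rw [hh z, Finset.prod_div_distrib, ← mul_div_assoc, div_eq_iff (hden z hz)]
      exact heq
  have hnodup : (BlaschkeAux.PP k lam ζ α).roots.Nodup := by
    rw [Multiset.nodup_iff_count_le_one]
    intro z
    rw [Polynomial.count_roots]
    by_contra hc
    push_neg at hc
    rw [Polynomial.one_lt_rootMultiplicity_iff_isRoot hP0] at hc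
    obtain ⟨hr, hr'⟩ := hc
    have hz : ‖z‖ = 1 := ((hiff z).mpr hr).1
    apply BlaschkeAux.deriv_ne_zero' k α hz hα
    have e2 : lam * Polynomial.eval z (BlaschkeAux.NN k α)
        - ζ * Polynomial.eval z (BlaschkeAux.DD k α) = 0 := by
      have := hr
      rw [Polynomial.IsRoot] at this
      simpa [BlaschkeAux.PP] using this
    have e1 : lam * Polynomial.eval z (Polynomial.derivative (BlaschkeAux.NN k α))
        - ζ * Polynomial.eval z (Polynomial.derivative (BlaschkeAux.DD k α)) = 0 := by
      have := hr'
      rw [Polynomial.IsRoot, BlaschkeAux.derivative_PP] at this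
      simpa using this
    have hlam0 : lam ≠ 0 := by intro hc; rw [hc] at hlam; simp at hlam
    rw [Polynomial.eval_sub, Polynomial.eval_mul, Polynomial.eval_mul]
    have hkey : lam * (Polynomial.eval z (Polynomial.derivative (BlaschkeAux.NN k α)) *
        Polynomial.eval z (BlaschkeAux.DD k α) - Polynomial.eval z (BlaschkeAux.NN k α) *
        Polynomial.eval z (Polynomial.derivative (BlaschkeAux.DD k α))) = 0 := by
      linear_combination (Polynomial.eval z (BlaschkeAux.DD k α)) * e1
        - (Polynomial.eval z (Polynomial.derivative (BlaschkeAux.DD k α))) * e2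
    exact (mul_eq_zero.mp hkey).resolve_left hlam0
  have hcard : Multiset.card (BlaschkeAux.PP k lam ζ α).roots = k + 1 := by
    rw [← BlaschkeAux.natDegree_PP k lam ζ α hlam hζ hα]
    exact (Polynomial.splits_iff_card_roots).mp (IsAlgClosed.splits _)
  have hset : {z : ℂ | ‖z‖ = 1 ∧ h z = ζ} =
      ↑(BlaschkeAux.PP k lam ζ α).roots.toFinset := by
    ext z
    simp only [Set.mem_setOf_eq, Finset.mem_coe, Multiset.mem_toFinset,
      Polynomial.mem_roots hP0]
    exact hiff z
  constructor
  · rw [hset]; exact Finset.finite_toSet _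
  · rw [hset, Set.ncard_coe_finset, Multiset.toFinset_card_of_nodup hnodup, hcard]
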